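/- Let G be a finite simple graph with n ≥ 1 vertices and m edges, let M ≥ 1 and t be natural numbers, and let G' be the simple graph defined as follows: the vertex set of G' is V(G) ⊎ K where |K| = M·n; two vertices of V(G) are adjacent in G' iff they are distinct and non-adjacent in G; any two distinct vertices of K are adjacent in G'; and every vertex of K is adjacent in G' to every vertex of V(G). If G has a cut of size at least t, then G' admits a linear arrangement π whose cost satisfies cost(π) + t·M·n ≤ binom((M+1)·n + 1, 3). -/

import Mathlib

open Classical

/-- The graph `G'` of the reduction of Garey, Johnson and Stockmeyer: the complement of
`G` together with a clique `K` on `N` fresh vertices that is fully connected to the rest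
of the graph. -/
def gareyGraph {V : Type*} (G : SimpleGraph V) (N : ℕ) : SimpleGraph (V ⊕ Fin N) where
  Adj x y := x ≠ y ∧ ∀ u v, x = Sum.inl u → y = Sum.inl v → ¬ G.Adj u v
  symm := by
    constructor
    rintro x y ⟨hne, h⟩
    exact ⟨hne.symm, fun u v hy hx hadj => h v u hx hy (G.adj_symm hadj)⟩
  loopless := ⟨fun x h => h.1 rfl⟩

/-- The cost of the vertex placement `f : V → ℤ` for the simple graph `G`: the sum over
all edges `{u, v}` of `G` of `|f u - f v|`. -/
noncomputable def lincost {V : Type*} [Fintype V] [DecidableEq V]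
    (G : SimpleGraph V) (f : V → ℤ) : ℤ :=
  ∑ e ∈ Finset.univ.filter (fun e : Sym2 V => e ∈ G.edgeSet),
    Sym2.lift ⟨fun u v => |f u - f v|, fun u v => abs_sub_comm (f u) (f v)⟩ e

/-- The size of the cut determined by `S` in the simple graph `G`: the number of edges of
`G` with exactly one endpoint in `S`. -/
noncomputable def cutSizeS {V : Type*} [Fintype V] [DecidableEq V]
    (G : SimpleGraph V) (S : Finset V) : ℕ :=
  (Finset.univ.filter fun e : Sym2 V =>
    e ∈ G.edgeSet ∧ ∃ u v, e = s(u, v) ∧ u ∈ S ∧ v ∉ S).card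

/-- If `G` (with `n ≥ 1` vertices) has a cut of size at least `t`, then the graph `G'`
obtained by adding a fully connected clique of `M·n` fresh vertices to the complement of
`G` admits a linear arrangement `π` with `cost(π) + t·M·n ≤ C((M+1)·n + 1, 3)`. -/
lemma my_sum_range_sub (j : ℕ) : ∑ i ∈ Finset.range j, (j - i) = (j + 1).choose 2 := by
  induction j with
  | zero => simp
  | succ j ih =>
    have h2 : ∑ i ∈ Finset.range j, (j + 1 - i) = (∑ i ∈ Finset.range j, (j - i)) + j := by
      have : ∀ i ∈ Finset.range j, (j + 1 - i) = (j - i) + 1 := by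
        intro i hi; rw [Finset.mem_range] at hi; omega
      rw [Finset.sum_congr rfl this, Finset.sum_add_distrib, Finset.sum_const,
        Finset.card_range, smul_eq_mul, mul_one]
    rw [Finset.sum_range_succ, h2, ih]
    have h := Nat.choose_succ_succ (j+1) 1
    norm_num [Nat.choose_one_right] at h
    omega

lemma hockey (N : ℕ) : ∑ j ∈ Finset.range N, ∑ i ∈ Finset.range j, (j - i)
    = (N + 1).choose 3 := by
  induction N with
  | zero => decide
  | succ N ih =>
    rw [Finset.sum_range_succ, ih, my_sum_range_sub]
    have h := Nat.choose_succ_succ (N+1) 2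
    norm_num at h
    omega

lemma pairSum (N : ℕ) :
    ∑ p ∈ (Finset.univ ×ˢ Finset.univ : Finset (Fin N × Fin N)).filter (fun p => p.2 < p.1),
      (((p.1 : ℕ) : ℤ) - ((p.2 : ℕ) : ℤ)) = ((N + 1).choose 3 : ℤ) := by
  rw [Finset.sum_filter, Finset.sum_product]
  have key : ∀ a : Fin N, (∑ b : Fin N, if (b : Fin N) < a then (((a : ℕ) : ℤ) - ((b : ℕ) : ℤ)) else 0)
      = ((∑ i ∈ Finset.range (a : ℕ), ((a : ℕ) - i) : ℕ) : ℤ) := by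
    intro a
    calc (∑ b : Fin N, if (b : Fin N) < a then (((a : ℕ) : ℤ) - ((b : ℕ) : ℤ)) else 0)
        = ∑ x ∈ Finset.range N, (if x < (a : ℕ) then (((a : ℕ) : ℤ) - (x : ℤ)) else 0) := by
          rw [← Fin.sum_univ_eq_sum_range (fun x : ℕ => if x < (a : ℕ) then (((a : ℕ) : ℤ) - (x : ℤ)) else 0) N]
          exact Finset.sum_congr rfl fun b _ => by simp only [Fin.lt_def]
      _ = ∑ x ∈ (Finset.range N).filter (fun x => x < (a : ℕ)), (((a : ℕ) : ℤ) - (x : ℤ)) := by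
          rw [Finset.sum_filter]
      _ = ∑ x ∈ Finset.range (a : ℕ), (((a : ℕ) : ℤ) - (x : ℤ)) := by
          congr 1
          ext x; simp only [Finset.mem_filter, Finset.mem_range]
          constructor
          · exact fun h => h.2
          · exact fun h => ⟨h.trans a.isLt, h⟩
      _ = ((∑ i ∈ Finset.range (a : ℕ), ((a : ℕ) - i) : ℕ) : ℤ) := by
          rw [Nat.cast_sum]
          refine Finset.sum_congr rfl fun i hi => ?_
          rw [Finset.mem_range] at hi
          rw [Nat.cast_sub hi.le]
  rw [Finset.sum_congr rfl (fun a _ => key a)]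
  rw [Fin.sum_univ_eq_sum_range (fun x : ℕ => ((∑ i ∈ Finset.range x, (x - i) : ℕ) : ℤ)) N]
  rw [← Nat.cast_sum, hockey]

lemma sym2_sum {W : Type*} [Fintype W] [DecidableEq W] {N : ℕ} (π : W ≃ Fin N) :
    ∑ e ∈ Finset.univ.filter (fun e : Sym2 W => ¬ e.IsDiag),
      Sym2.lift ⟨fun u v => |((π u : ℕ) : ℤ) - ((π v : ℕ) : ℤ)|,
        fun u v => abs_sub_comm _ _⟩ e = ((N + 1).choose 3 : ℤ) := by
  rw [← pairSum N]
  refine (Finset.sum_bij (fun (p : Fin N × Fin N) (_ : p ∈ (Finset.univ ×ˢ Finset.univ).filter (fun p => p.2 < p.1)) => s(π.symm p.1, π.symm p.2)) ?_ ?_ ?_ ?_).symm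
  · intro p hp
    rw [Finset.mem_filter] at hp ⊢
    refine ⟨Finset.mem_univ _, ?_⟩
    rw [Sym2.mk_isDiag_iff]
    intro h
    exact absurd (π.symm.injective h) (ne_of_gt hp.2)
  · intro p hp q hq heq
    rw [Finset.mem_filter] at hp hq
    rw [Sym2.mk_eq_mk_iff (p := (π.symm p.1, π.symm p.2)) (q := (π.symm q.1, π.symm q.2))] at heq
    rcases heq with h | h
    · rw [Prod.mk.injEq] at h
      exact Prod.ext (π.symm.injective h.1) (π.symm.injective h.2)
    · rw [Prod.mk.injEq] at h
      have h1 : p.1 = q.2 := π.symm.injective h.1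
      have h2 : p.2 = q.1 := π.symm.injective h.2
      exact absurd (h1 ▸ h2 ▸ hp.2) (lt_asymm hq.2)
  · intro e he
    rw [Finset.mem_filter] at he
    induction e with
    | _ x y =>
      have hxy : x ≠ y := by
        intro h; exact he.2 (by rw [Sym2.mk_isDiag_iff]; exact h)
      have hne : π x ≠ π y := fun h => hxy (π.injective h)
      rcases hne.lt_or_gt with h | h
      · refine ⟨(π y, π x), ?_, ?_⟩
        · rw [Finset.mem_filter]
          exact ⟨Finset.mem_product.mpr ⟨Finset.mem_univ _, Finset.mem_univ _⟩, h⟩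
        · simp [Sym2.eq_swap]
      · refine ⟨(π x, π y), ?_, ?_⟩
        · rw [Finset.mem_filter]
          exact ⟨Finset.mem_product.mpr ⟨Finset.mem_univ _, Finset.mem_univ _⟩, h⟩
        · simp
  · intro p hp
    rw [Finset.mem_filter] at hp
    simp only [Sym2.lift_mk, Equiv.apply_symm_apply]
    rw [abs_of_nonneg]
    rw [sub_nonneg]
    exact_mod_cast (le_of_lt hp.2)

noncomputable def myPi {V : Type*} [Fintype V] [DecidableEq V] (S : Finset V) (K n : ℕ)
    (h : S.card + (K + Sᶜ.card) = n + K) : (V ⊕ Fin K) ≃ Fin (n + K) :=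
  ((Equiv.sumCongr (Equiv.sumCompl (· ∈ S)).symm (Equiv.refl (Fin K))).trans <|
  (Equiv.sumAssoc _ _ _).trans <|
  (Equiv.sumCongr (Equiv.refl _) (Equiv.sumComm _ _)).trans <|
  (Equiv.sumCongr S.equivFin (Equiv.sumCongr (Equiv.refl (Fin K))
    ((Equiv.subtypeEquivRight (fun x => (Finset.mem_compl (s := S)).symm)).trans Sᶜ.equivFin))).trans <|
  (Equiv.sumCongr (Equiv.refl (Fin S.card)) finSumFinEquiv).trans <|
  finSumFinEquiv).trans (finCongr h)

lemma myPi_mem {V : Type*} [Fintype V] [DecidableEq V] (S : Finset V) (K n : ℕ)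
    (h : S.card + (K + Sᶜ.card) = n + K) (u : V) (hu : u ∈ S) :
    ((myPi S K n h (Sum.inl u) : Fin (n+K)) : ℕ) < S.card := by
  simp [myPi, Equiv.sumCompl_symm_apply_of_pos (p := (· ∈ S)) hu]

lemma myPi_not_mem {V : Type*} [Fintype V] [DecidableEq V] (S : Finset V) (K n : ℕ)
    (h : S.card + (K + Sᶜ.card) = n + K) (v : V) (hv : v ∉ S) :
    S.card + K ≤ ((myPi S K n h (Sum.inl v) : Fin (n+K)) : ℕ) := by
  simp [myPi, Equiv.sumCompl_symm_apply_of_neg (p := (· ∈ S)) hv]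

theorem maxcut_to_ola_forward {V : Type*} [Fintype V] [DecidableEq V]
    (G : SimpleGraph V)
    (n : ℕ) (hn : n = Fintype.card V) (hn1 : 1 ≤ n)
    (M t : ℕ) (hM : 1 ≤ M)
    (hcut : ∃ S : Finset V, t ≤ cutSizeS G S) :
    ∃ π : (V ⊕ Fin (M * n)) ≃ Fin (n + M * n),
      lincost (gareyGraph G (M * n)) (fun v => ((π v : ℕ) : ℤ)) + (t * M * n : ℕ) ≤
        (Nat.choose ((M + 1) * n + 1) 3 : ℤ) := by
  obtain ⟨S, hS⟩ := hcut
  set K := M * n with hK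
  have hcard : S.card + Sᶜ.card = n := by
    rw [Finset.card_add_card_compl]; exact hn.symm
  have hsc : S.card + (K + Sᶜ.card) = n + K := by omega
  refine ⟨myPi S K n hsc, ?_⟩
  set π := myPi S K n hsc with hπ
  set f : (V ⊕ Fin K) → ℤ := fun v => ((π v : ℕ) : ℤ) with hf
  set F : Sym2 (V ⊕ Fin K) → ℤ :=
    Sym2.lift ⟨fun u v => |f u - f v|, fun u v => abs_sub_comm (f u) (f v)⟩ with hF
  have hFnonneg : ∀ e, 0 ≤ F e := by
    intro e; induction e with
    | _ x y => simp only [hF, Sym2.lift_mk]; exact abs_nonneg _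
  set A := Finset.univ.filter (fun e : Sym2 (V ⊕ Fin K) => e ∈ (gareyGraph G K).edgeSet) with hA
  set B := Finset.univ.filter (fun e : Sym2 (V ⊕ Fin K) => ¬ e.IsDiag) with hB
  have hAB : A ⊆ B := by
    intro e he
    rw [hA, Finset.mem_filter] at he
    rw [hB, Finset.mem_filter]
    exact ⟨Finset.mem_univ _, SimpleGraph.not_isDiag_of_mem_edgeSet _ he.2⟩
  have hsum : ∑ e ∈ B \ A, F e + ∑ e ∈ A, F e = ∑ e ∈ B, F e := Finset.sum_sdiff hAB
  have htot : ∑ e ∈ B, F e = (((n + K) + 1).choose 3 : ℤ) := sym2_sum π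
  set C := Finset.univ.filter (fun e : Sym2 V =>
    e ∈ G.edgeSet ∧ ∃ u v, e = s(u, v) ∧ u ∈ S ∧ v ∉ S) with hC
  have hCcard : t ≤ C.card := hS
  set D := C.image (Sym2.map (Sum.inl : V → V ⊕ Fin K)) with hD
  have hDsub : D ⊆ B \ A := by
    intro e' he'
    rw [hD, Finset.mem_image] at he'
    obtain ⟨e, he, rfl⟩ := he'
    rw [hC, Finset.mem_filter] at he
    obtain ⟨-, hadj, u, v, rfl, hu, hv⟩ := he
    have hGadj : G.Adj u v := (SimpleGraph.mem_edgeSet G).mp hadj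
    have huv : u ≠ v := G.ne_of_adj hGadj
    rw [Finset.mem_sdiff]
    constructor
    · rw [hB, Finset.mem_filter]
      refine ⟨Finset.mem_univ _, ?_⟩
      rw [Sym2.map_pair_eq, Sym2.mk_isDiag_iff]
      exact fun h => huv (Sum.inl_injective h)
    · rw [hA, Finset.mem_filter]
      rintro ⟨-, hmem⟩
      rw [Sym2.map_pair_eq, SimpleGraph.mem_edgeSet] at hmem
      exact (hmem : _ ≠ _ ∧ _).2 u v rfl rfl hGadj
  have hFC : ∀ e ∈ C, (K : ℤ) ≤ F (Sym2.map Sum.inl e) := by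
    intro e he
    rw [hC, Finset.mem_filter] at he
    obtain ⟨-, -, u, v, rfl, hu, hv⟩ := he
    rw [Sym2.map_pair_eq]
    have h1 : ((π (Sum.inl u) : ℕ) : ℤ) < S.card := by
      exact_mod_cast myPi_mem S K n hsc u hu
    have h2 : (S.card + K : ℤ) ≤ ((π (Sum.inl v) : ℕ) : ℤ) := by
      exact_mod_cast myPi_not_mem S K n hsc v hv
    have : F s(Sum.inl u, Sum.inl v) = |f (Sum.inl u) - f (Sum.inl v)| := by
      simp only [hF, Sym2.lift_mk]
    rw [this]
    have := neg_abs_le (f (Sum.inl u) - f (Sum.inl v))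
    simp only [hf] at *
    linarith
  have hcut_bound : ((t * K : ℕ) : ℤ) ≤ ∑ e ∈ B \ A, F e := by
    have s1 : ∑ e ∈ D, F e ≤ ∑ e ∈ B \ A, F e :=
      Finset.sum_le_sum_of_subset_of_nonneg hDsub (fun e _ _ => hFnonneg e)
    have s2 : ∑ e ∈ D, F e = ∑ e ∈ C, F (Sym2.map Sum.inl e) := by
      rw [hD]
      exact Finset.sum_image (fun a _ b _ h => Sym2.map.injective Sum.inl_injective h)
    have s3 : ((C.card * K : ℕ) : ℤ) ≤ ∑ e ∈ C, F (Sym2.map Sum.inl e) := by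
      calc ((C.card * K : ℕ) : ℤ) = ∑ _e ∈ C, (K : ℤ) := by
            rw [Finset.sum_const, nsmul_eq_mul]; push_cast; ring
        _ ≤ ∑ e ∈ C, F (Sym2.map Sum.inl e) := Finset.sum_le_sum hFC
    have s4 : ((t * K : ℕ) : ℤ) ≤ ((C.card * K : ℕ) : ℤ) := by
      exact_mod_cast Nat.mul_le_mul_right K hCcard
    linarith [s2 ▸ s1]
  have hlin : lincost (gareyGraph G K) f = ∑ e ∈ A, F e := rfl
  have hfinal : lincost (gareyGraph G K) f + ((t * M * n : ℕ) : ℤ)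
      ≤ (((n + K) + 1).choose 3 : ℤ) := by
    have : ((t * M * n : ℕ) : ℤ) = ((t * K : ℕ) : ℤ) := by
      rw [hK]; push_cast; ring
    rw [hlin, this]
    linarith
  have hchoose : (M + 1) * n + 1 = (n + K) + 1 := by rw [hK]; ring
  rw [hchoose]
  exact hfinal
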